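/- Let A ∈ ℝ^{n×n}, H ∈ ℝ^{n×p} with rank(H) = p, C ∈ ℝ^{l×n}, and define S_r = [C·A^r·H, C·A^{r-1}·H, …, C·H] ∈ ℝ^{l×(r+1)p} and S_{r-1} = [C·A^{r-1}·H, …, C·H] ∈ ℝ^{l×rp}. There exists L ∈ ℝ^{n×l} with L·S_r = [H, 0, …, 0] if and only if rank(S_r) − rank(S_{r-1}) = p. -/

import Mathlib

open Matrix Module LinearMap

section Core

variable {pι qι lι nι : Type*} [Fintype pι] [Fintype qι] [Fintype lι] [Fintype nι]
  [DecidableEq pι] [DecidableEq qι] [DecidableEq lι]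

/-- Column space of a horizontal concatenation is the sup of the column spaces. -/
lemma range_fromColumns_mulVecLin (B : Matrix lι pι ℝ) (P : Matrix lι qι ℝ) :
    LinearMap.range (fromCols B P).mulVecLin =
      LinearMap.range B.mulVecLin ⊔ LinearMap.range P.mulVecLin := by
  apply le_antisymm
  · rintro _ ⟨v, rfl⟩
    have hv : v = Sum.elim (v ∘ Sum.inl) (v ∘ Sum.inr) := by
      funext x; cases x <;> rfl
    rw [mulVecLin_apply, hv, fromCols_mulVec_sumElim]
    exact Submodule.add_mem _ (Submodule.mem_sup_left ⟨_, rfl⟩)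
      (Submodule.mem_sup_right ⟨_, rfl⟩)
  · apply sup_le
    · rintro _ ⟨x, rfl⟩
      refine ⟨Sum.elim x 0, ?_⟩
      rw [mulVecLin_apply, fromCols_mulVec_sumElim, mulVec_zero, add_zero, mulVecLin_apply]
    · rintro _ ⟨y, rfl⟩
      refine ⟨Sum.elim 0 y, ?_⟩
      rw [mulVecLin_apply, fromCols_mulVec_sumElim, mulVec_zero, zero_add, mulVecLin_apply]

lemma core_lemma (B : Matrix lι pι ℝ) (P : Matrix lι qι ℝ) (H : Matrix nι pι ℝ)
    (hH : H.rank = Fintype.card pι) :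
    (∃ L : Matrix nι lι ℝ, L * B = H ∧ L * P = 0) ↔
      (fromCols B P).rank - P.rank = Fintype.card pι := by
  set U := LinearMap.range B.mulVecLin with hU
  set W := LinearMap.range P.mulVecLin with hW
  have hrank : (fromCols B P).rank = finrank ℝ (U ⊔ W : Submodule ℝ (lι → ℝ)) := by
    rw [Matrix.rank, range_fromColumns_mulVecLin]
  have hdim := Submodule.finrank_sup_add_finrank_inf_eq U W
  rw [Matrix.rank] at hH
  have hWrank : P.rank = finrank ℝ W := by rw [Matrix.rank]
  have hHinj : Function.Injective H.mulVecLin := by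
    rw [← LinearMap.ker_eq_bot, ← Submodule.finrank_eq_zero]
    have h1 := H.mulVecLin.finrank_range_add_finrank_ker
    rw [Module.finrank_pi] at h1
    omega
  constructor
  · rintro ⟨L, hLB, hLP⟩
    -- finrank U = card p
    have hUcard : finrank ℝ U = Fintype.card pι := by
      have h1 : U.map L.mulVecLin = LinearMap.range H.mulVecLin := by
        rw [hU, ← LinearMap.range_comp, ← mulVecLin_mul, hLB]
      have h2 : finrank ℝ (U.map L.mulVecLin) ≤ finrank ℝ U :=
        Submodule.finrank_map_le _ _
      rw [h1] at h2
      rw [hH] at h2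
      have h3 : finrank ℝ U ≤ Fintype.card pι := B.rank_le_card_width
      omega
    have hinf : U ⊓ W = ⊥ := by
      rw [Submodule.eq_bot_iff]
      rintro v ⟨⟨x, hx⟩, ⟨y, hy⟩⟩
      have h4 : H.mulVecLin x = 0 := by
        calc H.mulVecLin x = (L * B).mulVecLin x := by rw [hLB]
        _ = L.mulVecLin (B.mulVecLin x) := by rw [mulVecLin_mul]; rfl
        _ = L.mulVecLin (P.mulVecLin y) := by rw [hx, hy]
        _ = (L * P).mulVecLin y := by rw [mulVecLin_mul]; rfl
        _ = 0 := by rw [hLP, mulVecLin_zero]; rfl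
      have := hHinj (a₁ := x) (a₂ := 0) (by simpa using h4)
      rw [← hx, this, map_zero]
    rw [hinf, finrank_bot] at hdim
    rw [hrank, hWrank]
    omega
  · intro hr
    rw [hrank, hWrank] at hr
    have hWle : finrank ℝ W ≤ finrank ℝ (U ⊔ W : Submodule ℝ (lι → ℝ)) :=
      Submodule.finrank_mono le_sup_right
    have hUle : finrank ℝ U ≤ Fintype.card pι := B.rank_le_card_width
    have hUcard : finrank ℝ U = Fintype.card pι := by omega
    have hinf0 : finrank ℝ (U ⊓ W : Submodule ℝ (lι → ℝ)) = 0 := by omega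
    have hinf : U ⊓ W = ⊥ := Submodule.finrank_eq_zero.mp hinf0
    have hBinj : Function.Injective B.mulVecLin := by
      rw [← LinearMap.ker_eq_bot, ← Submodule.finrank_eq_zero]
      have := B.mulVecLin.finrank_range_add_finrank_ker
      rw [← hU, Module.finrank_pi] at this
      omega
    -- find a complement V of U containing W
    obtain ⟨Z, hZ⟩ := Submodule.exists_isCompl (U ⊔ W)
    have hUV : IsCompl U (W ⊔ Z) := by
      constructor
      · rw [disjoint_iff, Submodule.eq_bot_iff]
        rintro v ⟨hvU, hvWZ⟩
        obtain ⟨w, hw, z, hz, rfl⟩ := Submodule.mem_sup.mp hvWZ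
        have hzmem : z ∈ (U ⊔ W) ⊓ Z := by
          refine ⟨?_, hz⟩
          have : z = (w + z) - w := by ring
          rw [this]
          exact Submodule.sub_mem _ (Submodule.mem_sup_left hvU) (Submodule.mem_sup_right hw)
        rw [disjoint_iff.mp hZ.disjoint] at hzmem
        have hz0 : z = 0 := hzmem
        subst hz0
        have : w + 0 ∈ U ⊓ W := ⟨hvU, by simpa using hw⟩
        rw [hinf] at this
        exact this
      · rw [codisjoint_iff, ← sup_assoc]
        exact codisjoint_iff.mp hZ.codisjoint
    set π := Submodule.projectionOnto U (W ⊔ Z) hUV with hπ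
    set eB := LinearEquiv.ofInjective B.mulVecLin hBinj with heB
    set g : (lι → ℝ) →ₗ[ℝ] (nι → ℝ) :=
      H.mulVecLin ∘ₗ (eB.symm : U →ₗ[ℝ] (pι → ℝ)) ∘ₗ π with hg
    refine ⟨LinearMap.toMatrix' g, ?_, ?_⟩
    · apply Matrix.toLin'.injective
      rw [Matrix.toLin'_apply', Matrix.toLin'_apply', mulVecLin_mul,
        ← Matrix.toLin'_apply', Matrix.toLin'_toMatrix']
      refine LinearMap.ext fun x => ?_
      have hmem : B.mulVecLin x ∈ U := ⟨x, rfl⟩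
      have h5 : π (B.mulVecLin x) = eB x := by
        have := Submodule.projectionOnto_apply_left hUV ⟨B.mulVecLin x, hmem⟩
        rw [hπ]
        rw [show (⟨B.mulVecLin x, hmem⟩ : U) = eB x from Subtype.ext rfl] at this
        exact this
      simp only [LinearMap.comp_apply, hg, h5, LinearEquiv.coe_coe,
        LinearEquiv.symm_apply_apply]
    · apply Matrix.toLin'.injective
      rw [Matrix.toLin'_apply', Matrix.toLin'_apply', mulVecLin_mul,
        ← Matrix.toLin'_apply', Matrix.toLin'_toMatrix']
      refine LinearMap.ext fun y => ?_
      have hmemW : P.mulVecLin y ∈ W := ⟨y, rfl⟩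
      have hmem : P.mulVecLin y ∈ W ⊔ Z := Submodule.mem_sup_left hmemW
      have h5 : π (P.mulVecLin y) = 0 :=
        Submodule.projectionOnto_apply_of_mem_right hUV hmem
      show H.mulVecLin (eB.symm (π (P.mulVecLin y))) = (Matrix.mulVecLin 0) y
      rw [h5, map_zero, map_zero, mulVecLin_zero]
      rfl

end Core

lemma submatrix_id_right_mul {m k o o' : Type*} [Fintype k]
    (L : Matrix m k ℝ) (S : Matrix k o ℝ) (f : o' → o) :
    (L * S).submatrix _root_.id f = L * S.submatrix _root_.id f := by
  ext i c
  simp [Matrix.mul_apply]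

lemma rank_submatrix_equiv_right {m o o' : Type*} [Fintype o] [Fintype o']
    (S : Matrix m o ℝ) (e : o' ≃ o) :
    (S.submatrix _root_.id e).rank = S.rank := by
  have hr : LinearMap.range (S.submatrix _root_.id e).mulVecLin =
      LinearMap.range S.mulVecLin := by
    apply le_antisymm
    · rintro _ ⟨v, rfl⟩
      refine ⟨v ∘ e.symm, ?_⟩
      rw [mulVecLin_apply, mulVecLin_apply, submatrix_mulVec_equiv]
      rfl
    · rintro _ ⟨v, rfl⟩
      refine ⟨v ∘ e, ?_⟩
      rw [mulVecLin_apply, mulVecLin_apply, submatrix_mulVec_equiv]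
      have : (v ∘ e) ∘ e.symm = v := by funext x; simp
      rw [this]
      rfl
  rw [Matrix.rank, Matrix.rank, hr]

/-- Horizontal concatenation of Markov parameters
`S_r = [C·A^r·H, C·A^{r-1}·H, …, C·H]`, with column blocks indexed by `Fin (r+1)`. -/
def Sblock (n p l r : ℕ) (A : Matrix (Fin n) (Fin n) ℝ)
    (H : Matrix (Fin n) (Fin p) ℝ) (C : Matrix (Fin l) (Fin n) ℝ) :
    Matrix (Fin l) (Fin (r + 1) × Fin p) ℝ :=
  Matrix.of fun i dj => (C * A ^ (r - (dj.1 : ℕ)) * H) i dj.2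

theorem stmt_10 (n p l r : ℕ)
    (A : Matrix (Fin n) (Fin n) ℝ) (H : Matrix (Fin n) (Fin p) ℝ)
    (C : Matrix (Fin l) (Fin n) ℝ)
    (hH : H.rank = p)
    (Sprev : Matrix (Fin l) (Fin r × Fin p) ℝ)
    (hSprev : Sprev = Matrix.of fun i dj => (C * A ^ (r - 1 - (dj.1 : ℕ)) * H) i dj.2) :
    (∃ L : Matrix (Fin n) (Fin l) ℝ,
        L * Sblock n p l r A H C =
          Matrix.of fun i (dj : Fin (r + 1) × Fin p) =>
            if dj.1 = 0 then H i dj.2 else 0) ↔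
      (Sblock n p l r A H C).rank - Sprev.rank = p := by
  set S := Sblock n p l r A H C with hS
  set T : Matrix (Fin n) (Fin (r + 1) × Fin p) ℝ :=
    Matrix.of fun i (dj : Fin (r + 1) × Fin p) => if dj.1 = 0 then H i dj.2 else 0 with hT
  set B : Matrix (Fin l) (Fin p) ℝ := C * A ^ r * H with hB
  -- the reindexing equivalence
  let e : (Fin p ⊕ (Fin r × Fin p)) ≃ (Fin (r + 1) × Fin p) :=
    { toFun := Sum.elim (fun k => (0, k)) fun jk => (jk.1.succ, jk.2)
      invFun := fun jk => Fin.cases (Sum.inl jk.2) (fun j => Sum.inr (j, jk.2)) jk.1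
      left_inv := by rintro (k | ⟨j, k⟩) <;> simp
      right_inv := by
        rintro ⟨j, k⟩
        refine Fin.cases ?_ (fun i => ?_) j <;> simp }
  have hSsub : S.submatrix _root_.id e = Matrix.fromCols B Sprev := by
    ext i c
    rcases c with k | ⟨j, k⟩
    · show S i (0, k) = B i k
      rw [hS]
      show (C * A ^ (r - (0 : ℕ)) * H) i k = B i k
      rw [Nat.sub_zero, hB]
    · show S i (j.succ, k) = Sprev i (j, k)
      rw [hS, hSprev]
      show (C * A ^ (r - (j.succ : ℕ)) * H) i k = (C * A ^ (r - 1 - (j : ℕ)) * H) i k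
      have hjr : r - ((j.succ : Fin (r+1)) : ℕ) = r - 1 - (j : ℕ) := by
        rw [Fin.val_succ]; omega
      rw [hjr]
  have hTsub : T.submatrix _root_.id e = Matrix.fromCols H 0 := by
    ext i c
    rcases c with k | ⟨j, k⟩
    · show (if (0 : Fin (r + 1)) = 0 then H i k else 0) = H i k
      simp
    · show (if j.succ = 0 then H i k else 0) = (0 : Matrix (Fin n) (Fin r × Fin p) ℝ) i (j, k)
      simp [Fin.succ_ne_zero]
  have hrankS : S.rank = (Matrix.fromCols B Sprev).rank := by
    rw [← hSsub, rank_submatrix_equiv_right]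
  have hex : (∃ L : Matrix (Fin n) (Fin l) ℝ, L * S = T) ↔
      (∃ L : Matrix (Fin n) (Fin l) ℝ, L * B = H ∧ L * Sprev = 0) := by
    apply exists_congr
    intro L
    have h1 : L * S = T ↔ (L * S).submatrix _root_.id e = T.submatrix _root_.id e := by
      constructor
      · intro h; rw [h]
      · intro h
        ext i jk
        have h2 := congrFun (congrFun h i) (e.symm jk)
        simpa using h2
    rw [h1, submatrix_id_right_mul, hSsub, hTsub, Matrix.mul_fromCols,
      Matrix.fromCols_ext_iff]
  rw [hex, hrankS]
  have := core_lemma B Sprev H (by rw [hH, Fintype.card_fin])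
  rw [this, Fintype.card_fin]
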